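/- Let λ ⊢ m, s a word of weight λ, t a word of weight λ', and π any element of G(s,t). Then (−1)^s · sgn_s(π·t) · sgn(π) · sgn_t(π⁻¹·s) · (−1)^t = (−1)^λ, where (−1)^w := (−1)^{inv(w)} is the inversion sign of a word and (−1)^λ is the inversion sign of the word 12…λ_1 12…λ_2 … 12…λ_ℓ. In particular this product depends only on λ, not on the pair (s,t). -/

import Mathlib

open Finset

/-- Number of inversions of a word given as a list. -/
def invCount : List ℕ → ℕ
  | [] => 0
  | a :: l => l.countP (fun b => decide (b < a)) + invCount l

/-- Sign of a finite sequence: its permutation sign if it is a permutation of `1,…,k`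
(`k` = its length), and `0` otherwise. -/
def seqSgn (l : List ℕ) : ℤ :=
  if (l : Multiset ℕ) = ((List.range' 1 l.length : List ℕ) : Multiset ℕ) then
    (-1) ^ invCount l
  else 0

/-- Positions (in increasing order) of the letter `i` in the word `s`. -/
def blockList {m : ℕ} (s : Fin m → ℕ) (i : ℕ) : List (Fin m) :=
  (List.finRange m).filter (fun p => decide (s p = i))

/-- The blockwise signature `sgn_s(σ)`: the product over the blocks of `s` of the signs of
`σ` read along the block (in increasing position order). -/
def sgnWord {m : ℕ} (s σ : Fin m → ℕ) : ℤ :=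
  ∏ i ∈ Finset.range m, seqSgn ((blockList s (i + 1)).map σ)

/-- The action of `S_m` on words of length `m` by permuting positions: `(π·t) i = t (π⁻¹ i)`. -/
def pact {m : ℕ} (π : Equiv.Perm (Fin m)) (t : Fin m → ℕ) : Fin m → ℕ :=
  fun p => t (π⁻¹ p)

/-- `w` is a word of weight `L`: the letter `i+1` occurs exactly `L.getD i 0` times. -/
def hasWeight {m : ℕ} (w : Fin m → ℕ) (L : List ℕ) : Prop :=
  ∀ i : ℕ, (Finset.univ.filter (fun p => w p = i + 1)).card = L.getD i 0

/-- `L` is a partition of `m`. -/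
def IsPartitionOf (m : ℕ) (L : List ℕ) : Prop :=
  L.Pairwise (· ≥ ·) ∧ (∀ p ∈ L, 0 < p) ∧ L.sum = m

/-- The conjugate partition, as a list: its `j`-th part is `#{i : L i ≥ j+1}`. -/
def conjList (L : List ℕ) : List ℕ :=
  (List.range (L.headD 0)).map (fun j => L.countP (fun p => decide (j + 1 ≤ p)))

/-- The inversion sign `(−1)^w` of a word. -/
def wordSign {m : ℕ} (w : Fin m → ℕ) : ℤ :=
  (-1) ^ invCount ((List.finRange m).map w)

/-- The inversion sign `(−1)^λ` of a partition: the inversion sign of the word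
`1 2 … λ₁ 1 2 … λ₂ ⋯`. -/
def partSign (L : List ℕ) : ℤ :=
  (-1) ^ invCount ((L.map (fun p => List.range' 1 p)).flatten)

/-- The Young subgroup `Y_s`: the stabilizer of the word `s` in `S_m`. -/
def Ysub {m : ℕ} (s : Fin m → ℕ) : Set (Equiv.Perm (Fin m)) := {π | pact π s = s}

/-- `G(s,t) = {π ∈ S_m : sgn_s(π·t) ≠ 0}`. -/
def Gst {m : ℕ} (s t : Fin m → ℕ) : Set (Equiv.Perm (Fin m)) :=
  {π | sgnWord s (pact π t) ≠ 0}

section Aux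

open scoped Classical in
noncomputable def chi (c : Prop) : ℤ := if c then -1 else 1

lemma chi_pos {c : Prop} (h : c) : chi c = -1 := by simp [chi, h]
lemma chi_neg' {c : Prop} (h : ¬ c) : chi c = 1 := by simp [chi, h]
lemma chi_congr {c d : Prop} (h : c ↔ d) : chi c = chi d := by
  by_cases hc : c
  · rw [chi_pos hc, chi_pos (h.mp hc)]
  · rw [chi_neg' hc, chi_neg' (fun hd => hc (h.mpr hd))]
lemma chi_mul {c d : Prop} (h : ¬ (c ∧ d)) : chi c * chi d = chi (c ∨ d) := by
  by_cases hc : c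
  · rw [chi_pos hc, chi_neg' (fun hd => h ⟨hc, hd⟩), chi_pos (Or.inl hc)]; ring
  · by_cases hd : d
    · rw [chi_neg' hc, chi_pos hd, chi_pos (Or.inr hd)]; ring
    · rw [chi_neg' hc, chi_neg' hd, chi_neg' (by tauto)]; ring
lemma neg_chi (c : Prop) : -chi c = chi (¬ c) := by
  by_cases hc : c
  · rw [chi_pos hc, chi_neg' (not_not_intro hc)]; norm_num
  · rw [chi_neg' hc, chi_pos hc]
lemma chi_mul_self (c : Prop) : chi c * chi c = 1 := by
  by_cases hc : c
  · rw [chi_pos hc]; ring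
  · rw [chi_neg' hc]; ring

def pairsF (m : ℕ) : Finset (Fin m × Fin m) := Finset.univ.filter fun x => x.1 < x.2

lemma mem_pairsF {m : ℕ} {x : Fin m × Fin m} : x ∈ pairsF m ↔ x.1 < x.2 := by
  simp [pairsF]

noncomputable def sgnCnt (m : ℕ) (P : Fin m → Fin m → Prop) : ℤ :=
  ∏ x ∈ pairsF m, chi (P x.1 x.2)

lemma sgnCnt_congr {m : ℕ} {P Q : Fin m → Fin m → Prop}
    (h : ∀ p q : Fin m, p < q → (P p q ↔ Q p q)) : sgnCnt m P = sgnCnt m Q :=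
  Finset.prod_congr rfl (fun x hx => chi_congr (h x.1 x.2 (mem_pairsF.mp hx)))

lemma sgnCnt_of_false {m : ℕ} {P : Fin m → Fin m → Prop}
    (h : ∀ p q : Fin m, p < q → ¬ P p q) : sgnCnt m P = 1 :=
  Finset.prod_eq_one (fun x hx => chi_neg' (h _ _ (mem_pairsF.mp hx)))

lemma sgnCnt_mul {m : ℕ} {P Q : Fin m → Fin m → Prop}
    (h : ∀ p q : Fin m, p < q → ¬ (P p q ∧ Q p q)) :
    sgnCnt m P * sgnCnt m Q = sgnCnt m (fun p q => P p q ∨ Q p q) := by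
  rw [sgnCnt, sgnCnt, sgnCnt, ← Finset.prod_mul_distrib]
  exact Finset.prod_congr rfl fun x hx => chi_mul (h _ _ (mem_pairsF.mp hx))

lemma sgnCnt_mul_self {m : ℕ} (P : Fin m → Fin m → Prop) : sgnCnt m P * sgnCnt m P = 1 := by
  rw [sgnCnt, ← Finset.prod_mul_distrib]
  exact Finset.prod_eq_one fun x hx => chi_mul_self _

lemma prod_chi {β : Type*} (F : Finset β) (Q : β → Prop) [DecidablePred Q] :
    (∏ b ∈ F, chi (Q b)) = (-1 : ℤ) ^ ((F.filter Q).card) := by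
  rw [← Finset.prod_filter_mul_prod_filter_not F Q (fun b => chi (Q b))]
  rw [Finset.prod_congr rfl (fun b hb => chi_pos ((Finset.mem_filter.mp hb).2)),
    Finset.prod_const,
    Finset.prod_eq_one (fun b hb => chi_neg' ((Finset.mem_filter.mp hb).2)), mul_one]

lemma countP_eq_card_filter_univ {m : ℕ} (l : List (Fin m)) (hl : l.Nodup) (g : Fin m → Prop)
    [DecidablePred g] [DecidablePred (fun b => b ∈ l ∧ g b)] :
    l.countP (fun b => decide (g b)) = (Finset.univ.filter (fun b => b ∈ l ∧ g b)).card := by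
  rw [List.countP_eq_length_filter, ← List.toFinset_card_of_nodup (hl.filter _)]
  congr 1
  ext b
  simp [List.mem_filter]

end Aux
section Aux2

open scoped Classical

lemma pow_invCount_map {m : ℕ} (x : Fin m → ℕ) :
    ∀ (l : List (Fin m)), l.Pairwise (· < ·) →
      (-1 : ℤ) ^ invCount (l.map x)
        = ∏ pr ∈ pairsF m, chi (pr.1 ∈ l ∧ pr.2 ∈ l ∧ x pr.2 < x pr.1) := by
  intro l
  induction l with
  | nil =>
    intro _
    rw [List.map_nil]
    show (-1 : ℤ) ^ invCount [] = _
    rw [show invCount [] = 0 from rfl, pow_zero]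
    exact (Finset.prod_eq_one (fun pr _ => chi_neg' (by simp))).symm
  | cons a l ih =>
    intro h
    obtain ⟨ha, hl⟩ := List.pairwise_cons.mp h
    have hanotmem : a ∉ l := fun hmem => lt_irrefl a (ha a hmem)
    rw [List.map_cons]
    rw [show invCount (x a :: l.map x)
        = (l.map x).countP (fun b => decide (b < x a)) + invCount (l.map x) from rfl]
    rw [pow_add, ih hl]
    have key1 : ∏ pr ∈ pairsF m, chi ((pr.1 ∈ a :: l) ∧ pr.2 ∈ a :: l ∧ x pr.2 < x pr.1)
        = (∏ pr ∈ pairsF m, chi (pr.1 = a ∧ pr.2 ∈ l ∧ x pr.2 < x a))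
          * ∏ pr ∈ pairsF m, chi (pr.1 ∈ l ∧ pr.2 ∈ l ∧ x pr.2 < x pr.1) := by
      rw [← Finset.prod_mul_distrib]
      refine Finset.prod_congr rfl fun pr hpr => ?_
      have hlt := mem_pairsF.mp hpr
      rw [chi_mul (fun ⟨h1, h2⟩ => hanotmem (h1.1 ▸ h2.1))]
      refine chi_congr ?_
      constructor
      · rintro ⟨h1, h2, h3⟩
        rcases List.mem_cons.mp h1 with h1 | h1
        · rcases List.mem_cons.mp h2 with h2 | h2
          · exact absurd (h1 ▸ h2 ▸ hlt) (lt_irrefl _)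
          · exact Or.inl ⟨h1, h2, h1 ▸ h3⟩
        · rcases List.mem_cons.mp h2 with h2 | h2
          · exact absurd (h2 ▸ hlt) (fun hc => lt_asymm hc (ha pr.1 h1))
          · exact Or.inr ⟨h1, h2, h3⟩
      · rintro (⟨h1, h2, h3⟩ | ⟨h1, h2, h3⟩)
        · exact ⟨h1 ▸ List.mem_cons_self, List.mem_cons_of_mem _ h2, h1 ▸ h3⟩
        · exact ⟨List.mem_cons_of_mem _ h1, List.mem_cons_of_mem _ h2, h3⟩
    have key2 : ∏ pr ∈ pairsF m, chi (pr.1 = a ∧ pr.2 ∈ l ∧ x pr.2 < x a)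
        = (-1 : ℤ) ^ ((l.map x).countP (fun b => decide (b < x a))) := by
      have step1 : ∏ pr ∈ pairsF m, chi (pr.1 = a ∧ pr.2 ∈ l ∧ x pr.2 < x a)
          = ∏ pr ∈ (pairsF m).filter (fun pr => pr.1 = a), chi (pr.1 = a ∧ pr.2 ∈ l ∧ x pr.2 < x a) := by
        rw [Finset.prod_filter]
        refine Finset.prod_congr rfl fun pr _ => ?_
        by_cases hh : pr.1 = a
        · rw [if_pos hh]
        · rw [if_neg hh, chi_neg' (fun hc => hh hc.1)]
      have step2 : ∏ pr ∈ (pairsF m).filter (fun pr => pr.1 = a), chi (pr.1 = a ∧ pr.2 ∈ l ∧ x pr.2 < x a)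
          = ∏ b ∈ Finset.univ.filter (fun b => a < b), chi (b ∈ l ∧ x b < x a) := by
        refine Finset.prod_nbij' (fun pr => pr.2) (fun b => (a, b)) ?_ ?_ ?_ ?_ ?_
        · intro pr hpr
          obtain ⟨h1, h2⟩ := Finset.mem_filter.mp hpr
          exact Finset.mem_filter.mpr ⟨Finset.mem_univ _, h2 ▸ mem_pairsF.mp h1⟩
        · intro b hb
          exact Finset.mem_filter.mpr ⟨mem_pairsF.mpr (Finset.mem_filter.mp hb).2, rfl⟩
        · intro pr hpr
          obtain ⟨_, h2⟩ := Finset.mem_filter.mp hpr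
          exact Prod.ext h2.symm rfl
        · intro b _
          rfl
        · intro pr hpr
          obtain ⟨_, h2⟩ := Finset.mem_filter.mp hpr
          exact chi_congr (by rw [h2]; tauto)
      have step3 : ∏ b ∈ Finset.univ.filter (fun b => a < b), chi (b ∈ l ∧ x b < x a)
          = ∏ b ∈ (Finset.univ : Finset (Fin m)), chi (b ∈ l ∧ x b < x a) := by
        refine Finset.prod_subset (Finset.filter_subset _ _) ?_
        intro b _ hb
        refine chi_neg' fun hc => hb (Finset.mem_filter.mpr ⟨Finset.mem_univ _, ha b hc.1⟩)
      have step4 : (l.map x).countP (fun b => decide (b < x a))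
          = (Finset.univ.filter (fun b : Fin m => b ∈ l ∧ x b < x a)).card := by
        rw [List.countP_map]
        have hnodup : l.Nodup := hl.imp ne_of_lt
        exact (by simpa [Function.comp_def] using
          countP_eq_card_filter_univ l hnodup (fun b => x b < x a))
      rw [step1, step2, step3, prod_chi, step4]
    rw [key1, key2]

end Aux2
section Aux3

lemma wordSign_eq_sgnCnt {m : ℕ} (w : Fin m → ℕ) :
    wordSign w = sgnCnt m (fun p q => w q < w p) := by
  rw [wordSign, pow_invCount_map w (List.finRange m) (List.pairwise_lt_finRange m)]
  exact Finset.prod_congr rfl fun pr _ => chi_congr (by simp [List.mem_finRange])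

lemma sgnCnt_comp {m : ℕ} {K : Type*} [LinearOrder K] (k : Fin m → K)
    (hk : Function.Injective k) (π : Equiv.Perm (Fin m)) :
    sgnCnt m (fun p q => k (π q) < k (π p)) * sgnCnt m (fun p q => (π q : Fin m) < π p)
      = sgnCnt m (fun p q => k q < k p) := by
  rw [sgnCnt, sgnCnt, sgnCnt, ← Finset.prod_mul_distrib]
  refine Finset.prod_nbij'
    (fun pr => if (π pr.1 : Fin m) < π pr.2 then (π pr.1, π pr.2) else (π pr.2, π pr.1))
    (fun pr => if (π⁻¹ pr.1 : Fin m) < π⁻¹ pr.2 then (π⁻¹ pr.1, π⁻¹ pr.2) else (π⁻¹ pr.2, π⁻¹ pr.1))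
    ?_ ?_ ?_ ?_ ?_
  · intro pr hpr
    have hlt := mem_pairsF.mp hpr
    by_cases hc : (π pr.1 : Fin m) < π pr.2
    · rw [if_pos hc]; exact mem_pairsF.mpr hc
    · rw [if_neg hc]
      refine mem_pairsF.mpr (lt_of_le_of_ne (not_lt.mp hc) ?_)
      exact fun h => (ne_of_lt hlt) (π.injective h.symm)
  · intro pr hpr
    have hlt := mem_pairsF.mp hpr
    by_cases hc : (π⁻¹ pr.1 : Fin m) < π⁻¹ pr.2
    · rw [if_pos hc]; exact mem_pairsF.mpr hc
    · rw [if_neg hc]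
      refine mem_pairsF.mpr (lt_of_le_of_ne (not_lt.mp hc) ?_)
      exact fun h => (ne_of_lt hlt) (π⁻¹.injective h.symm)
  · intro pr hpr
    have hlt := mem_pairsF.mp hpr
    by_cases hc : (π pr.1 : Fin m) < π pr.2
    · rw [if_pos hc]
      simp only [Equiv.Perm.inv_def, Equiv.symm_apply_apply]
      rw [if_pos hlt]
    · rw [if_neg hc]
      simp only [Equiv.Perm.inv_def, Equiv.symm_apply_apply]
      rw [if_neg (by intro h; exact absurd hlt (not_lt.mpr (le_of_lt h)))]
  · intro pr hpr
    have hlt := mem_pairsF.mp hpr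
    by_cases hc : (π⁻¹ pr.1 : Fin m) < π⁻¹ pr.2
    · rw [if_pos hc]
      simp only [Equiv.Perm.inv_def, Equiv.apply_symm_apply]
      rw [if_pos hlt]
    · rw [if_neg hc]
      simp only [Equiv.Perm.inv_def, Equiv.apply_symm_apply]
      rw [if_neg (by intro h; exact absurd hlt (not_lt.mpr (le_of_lt h)))]
  · intro pr hpr
    have hlt := mem_pairsF.mp hpr
    by_cases hc : (π pr.1 : Fin m) < π pr.2
    · rw [if_pos hc, chi_neg' (fun h => lt_asymm hc h), mul_one]
    · have hne : (π pr.1 : Fin m) ≠ π pr.2 := fun h => (ne_of_lt hlt) (π.injective h)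
      have hgt : (π pr.2 : Fin m) < π pr.1 := lt_of_le_of_ne (not_lt.mp hc) (Ne.symm hne)
      rw [if_neg hc, chi_pos hgt]
      have hkne : k (π pr.1) ≠ k (π pr.2) := fun h => hne (hk h)
      rw [show chi (k (π pr.2) < k (π pr.1)) * -1 = -(chi (k (π pr.2) < k (π pr.1))) by ring,
        neg_chi]
      exact chi_congr ⟨fun h => lt_of_le_of_ne (not_lt.mp h) hkne,
        fun h h2 => lt_asymm h h2⟩

noncomputable def permChi (m : ℕ) (σ : Equiv.Perm (Fin m)) : ℤ :=
  sgnCnt m (fun p q => σ q < σ p)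

lemma permChi_one (m : ℕ) : permChi m 1 = 1 :=
  sgnCnt_of_false (fun p q h hc => lt_asymm h hc)

lemma permChi_mul {m : ℕ} (σ π : Equiv.Perm (Fin m)) :
    permChi m (σ * π) = permChi m σ * permChi m π := by
  have h := sgnCnt_comp (k := ⇑σ) σ.injective π
  have h2 : permChi m (σ * π) = sgnCnt m (fun p q => σ (π q) < σ (π p)) := rfl
  have h3 := sgnCnt_mul_self (m := m) (fun p q => (π q : Fin m) < π p)
  calc permChi m (σ * π) = permChi m (σ * π) * (sgnCnt m (fun p q => (π q : Fin m) < π p)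
        * sgnCnt m (fun p q => (π q : Fin m) < π p)) := by rw [h3, mul_one]
    _ = (sgnCnt m (fun p q => σ (π q) < σ (π p)) * sgnCnt m (fun p q => (π q : Fin m) < π p))
        * sgnCnt m (fun p q => (π q : Fin m) < π p) := by rw [h2]; ring
    _ = permChi m σ * permChi m π := by rw [h]; rfl

end Aux3
section Aux4

lemma permChi_swap {m : ℕ} (x y : Fin m) (hxy : x ≠ y) :
    permChi m (Equiv.swap x y) = -1 := by
  have hxval : (x : ℕ) ≠ (y : ℕ) := fun h => hxy (Fin.ext h)
  have h2 : 1 < m := by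
    have := x.2; have := y.2; omega
  set a : Fin m := ⟨0, by omega⟩ with ha_def
  set b : Fin m := ⟨1, h2⟩ with hb_def
  have hab : a ≠ b := by
    intro h
    have := congrArg Fin.val h
    simp [ha_def, hb_def] at this
  have hspec : permChi m (Equiv.swap a b) = -1 := by
    rw [permChi, sgnCnt]
    rw [Finset.prod_eq_single_of_mem (a, b)
      (mem_pairsF.mpr (by simp [ha_def, hb_def, Fin.lt_def]))]
    · show chi (Equiv.swap a b b < Equiv.swap a b a) = -1
      rw [Equiv.swap_apply_left, Equiv.swap_apply_right]
      exact chi_pos (by simp [ha_def, hb_def, Fin.lt_def])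
    · intro pr hpr hne
      have hlt := mem_pairsF.mp hpr
      refine chi_neg' fun hcon => ?_
      have hqa : pr.2 ≠ a := by
        intro h
        rw [h] at hlt
        simp [ha_def, Fin.lt_def] at hlt
      by_cases hpa : pr.1 = a
      · by_cases hqb : pr.2 = b
        · exact hne (Prod.ext hpa hqb)
        · rw [hpa, Equiv.swap_apply_left, Equiv.swap_apply_of_ne_of_ne hqa hqb] at hcon
          have : (pr.2 : ℕ) < 1 := hcon
          have : pr.2 = a := Fin.ext (by omega)
          exact hqa this
      · by_cases hpb : pr.1 = b
        · have hqb : pr.2 ≠ b := by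
            intro h; rw [h, ← hpb] at hlt; exact lt_irrefl _ hlt
          rw [hpb, Equiv.swap_apply_right, Equiv.swap_apply_of_ne_of_ne hqa hqb] at hcon
          simp [ha_def, Fin.lt_def] at hcon
        · by_cases hqb : pr.2 = b
          · have : (pr.1 : ℕ) < 1 := by
              have := hlt
              rw [hqb] at this
              exact this
            exact hpa (Fin.ext (by simpa [ha_def] using Nat.lt_one_iff.mp this))
          · rw [Equiv.swap_apply_of_ne_of_ne hpa hpb,
              Equiv.swap_apply_of_ne_of_ne hqa hqb] at hcon
            exact lt_asymm hlt hcon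
  obtain ⟨c, hc⟩ := isConj_iff.mp (Equiv.Perm.isConj_swap hab hxy)
  have hccinv : permChi m c * permChi m c⁻¹ = 1 := by
    rw [← permChi_mul, mul_inv_cancel, permChi_one]
  calc permChi m (Equiv.swap x y) = permChi m (c * Equiv.swap a b * c⁻¹) := by rw [hc]
    _ = permChi m c * permChi m (Equiv.swap a b) * permChi m c⁻¹ := by
        rw [permChi_mul, permChi_mul]
    _ = (permChi m c * permChi m c⁻¹) * permChi m (Equiv.swap a b) := by ring
    _ = -1 := by rw [hccinv, hspec, one_mul]

lemma sign_eq_permChi {m : ℕ} (σ : Equiv.Perm (Fin m)) :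
    ((Equiv.Perm.sign σ : ℤˣ) : ℤ) = permChi m σ := by
  refine Equiv.Perm.swap_induction_on σ ?_ ?_
  · simp [permChi_one]
  · intro f x y hxy ih
    rw [permChi_mul, permChi_swap x y hxy, map_mul, Equiv.Perm.sign_swap hxy]
    push_cast
    rw [ih]
    try ring

end Aux4
section Aux5

lemma mem_blockList {m : ℕ} {s : Fin m → ℕ} {i : ℕ} {p : Fin m} :
    p ∈ blockList s i ↔ s p = i := by
  simp [blockList, List.mem_filter]

lemma blockList_pairwise {m : ℕ} (s : Fin m → ℕ) (i : ℕ) :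
    (blockList s i).Pairwise (· < ·) :=
  (List.pairwise_lt_finRange m).filter _

lemma blockList_nodup {m : ℕ} (s : Fin m → ℕ) (i : ℕ) : (blockList s i).Nodup :=
  (blockList_pairwise s i).imp ne_of_lt

lemma blockList_length {m : ℕ} (s : Fin m → ℕ) (i : ℕ) :
    (blockList s i).length = (Finset.univ.filter (fun p => s p = i)).card := by
  rw [← List.toFinset_card_of_nodup (blockList_nodup s i)]
  congr 1
  ext p
  simp [mem_blockList]

/-- Evaluation of `sgnWord` as a pair-counting sign. -/
lemma sgnWord_eq_sgnCnt {m : ℕ} (w x : Fin m → ℕ)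
    (hw : ∀ p : Fin m, ∃ i : ℕ, i < m ∧ w p = i + 1)
    (hM : ∀ i ∈ Finset.range m,
      ((blockList w (i + 1)).map x : Multiset ℕ)
        = ((List.range' 1 (blockList w (i + 1)).length : List ℕ) : Multiset ℕ)) :
    sgnWord w x = sgnCnt m (fun p q => w p = w q ∧ x q < x p) := by
  have hfac : ∀ i ∈ Finset.range m,
      seqSgn ((blockList w (i + 1)).map x)
        = ∏ pr ∈ pairsF m, chi (pr.1 ∈ blockList w (i + 1) ∧ pr.2 ∈ blockList w (i + 1)
            ∧ x pr.2 < x pr.1) := by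
    intro i hi
    rw [seqSgn, if_pos (by rw [List.length_map]; exact hM i hi)]
    exact pow_invCount_map x _ (blockList_pairwise w (i + 1))
  rw [sgnWord, Finset.prod_congr rfl hfac, Finset.prod_comm]
  refine Finset.prod_congr rfl fun pr hpr => ?_
  have hlt := mem_pairsF.mp hpr
  by_cases hcase : w pr.1 = w pr.2 ∧ x pr.2 < x pr.1
  · obtain ⟨i₀, hi₀, hw1⟩ := hw pr.1
    rw [Finset.prod_eq_single_of_mem i₀ (Finset.mem_range.mpr hi₀)]
    · rw [chi_pos ⟨mem_blockList.mpr hw1, mem_blockList.mpr (hcase.1 ▸ hw1), hcase.2⟩,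
        chi_pos hcase]
    · intro i _ hne
      refine chi_neg' fun hc => hne ?_
      have := mem_blockList.mp hc.1
      omega
  · rw [chi_neg' hcase]
    refine Finset.prod_eq_one fun i _ => chi_neg' fun hc => ?_
    exact hcase ⟨(mem_blockList.mp hc.1).trans (mem_blockList.mp hc.2.1).symm, hc.2.2⟩

lemma map_getD_range : ∀ (L : List ℕ), (List.range L.length).map (fun i => L.getD i 0) = L := by
  intro L
  induction L with
  | nil => rfl
  | cons a L ih =>
    rw [List.length_cons, List.range_succ_eq_map, List.map_cons, List.map_map]
    have h : ((fun i => (a :: L).getD i 0) ∘ Nat.succ) = fun i => L.getD i 0 :=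
      funext fun i => List.getD_cons_succ
    rw [h, ih]
    rfl

lemma list_range_map_sum (n : ℕ) (f : ℕ → ℕ) :
    ((List.range n).map f).sum = ∑ i ∈ Finset.range n, f i := by
  induction n with
  | zero => simp
  | succ n ih => rw [List.range_succ, List.map_append, List.sum_append, Finset.sum_range_succ, ih]; simp

lemma sum_getD_range (L : List ℕ) : ∑ i ∈ Finset.range L.length, L.getD i 0 = L.sum := by
  rw [← list_range_map_sum, map_getD_range]

lemma sorted_le_headD {L : List ℕ} (hL : L.Pairwise (· ≥ ·)) :
    ∀ p ∈ L, p ≤ L.headD 0 := by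
  cases L with
  | nil => intro p hp; cases hp
  | cons a L =>
    intro p hp
    rcases List.mem_cons.mp hp with h | h
    · simp [h]
    · exact (List.pairwise_cons.mp hL).1 p h

lemma sorted_getD_countP : ∀ (L : List ℕ), L.Pairwise (· ≥ ·) → ∀ i j : ℕ, i < L.length →
    (j + 1 ≤ L.getD i 0 ↔ i < L.countP (fun p => decide (j + 1 ≤ p))) := by
  intro L
  induction L with
  | nil => intro _ i j hi; cases hi
  | cons a L ih =>
    intro hs i j hi
    obtain ⟨hhead, htail⟩ := List.pairwise_cons.mp hs
    rw [List.countP_cons]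
    cases i with
    | zero =>
      simp only [List.getD_cons_zero]
      by_cases hja : j + 1 ≤ a
      · rw [if_pos (show decide (j + 1 ≤ a) = true by simpa using hja)]
        constructor
        · intro _; omega
        · intro _; exact hja
      · rw [if_neg (show ¬ decide (j + 1 ≤ a) = true by simp only [decide_eq_true_eq]; exact hja)]
        have hz : L.countP (fun p => decide (j + 1 ≤ p)) = 0 := by
          rw [List.countP_eq_zero]
          intro p hp
          simp only [decide_eq_true_eq]
          have := hhead p hp
          omega
        rw [hz]
        constructor
        · intro h; omega
        · intro h; omega
    | succ i =>
      rw [List.getD_cons_succ]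
      have hi' : i < L.length := by simpa using hi
      by_cases hja : j + 1 ≤ a
      · rw [if_pos (show decide (j + 1 ≤ a) = true by simpa using hja)]
        constructor
        · intro h
          have := (ih htail i j hi').mp h
          omega
        · intro h
          refine (ih htail i j hi').mpr ?_
          omega
      · rw [if_neg (show ¬ decide (j + 1 ≤ a) = true by simp only [decide_eq_true_eq]; exact hja)]
        have hz : L.countP (fun p => decide (j + 1 ≤ p)) = 0 := by
          rw [List.countP_eq_zero]
          intro p hp
          simp only [decide_eq_true_eq]
          have := hhead p hp
          omega
        have hgd : ¬ (j + 1 ≤ L.getD i 0) := by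
          have hmem : L.getD i 0 ∈ L := by
            rw [List.getD_eq_getElem _ _ hi']
            exact List.getElem_mem hi'
          have := hhead _ hmem
          omega
        rw [hz]
        constructor
        · intro h; exact absurd h hgd
        · intro h; omega

lemma conjList_length (L : List ℕ) : (conjList L).length = L.headD 0 := by
  simp [conjList]

lemma conjList_getD {L : List ℕ} (hL : L.Pairwise (· ≥ ·)) (j : ℕ) :
    (conjList L).getD j 0 = L.countP (fun p => decide (j + 1 ≤ p)) := by
  by_cases hj : j < L.headD 0
  · rw [conjList, List.getD_eq_getElem _ _ (by simpa using hj)]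
    simp
  · rw [List.getD_eq_default _ _ (by simpa [conjList_length] using hj)]
    symm
    rw [List.countP_eq_zero]
    intro p hp
    have := sorted_le_headD hL p hp
    simp only [decide_eq_true_eq]
    omega

lemma conjList_sum {L : List ℕ} (hL : L.Pairwise (· ≥ ·)) : (conjList L).sum = L.sum := by
  rw [conjList, list_range_map_sum]
  have key : ∀ (M : List ℕ) (N : ℕ), (∀ p ∈ M, p ≤ N) →
      ∑ j ∈ Finset.range N, M.countP (fun p => decide (j + 1 ≤ p)) = M.sum := by
    intro M
    induction M with
    | nil => intro N _; simp
    | cons a M ih =>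
      intro N hN
      have haN : a ≤ N := hN a (List.mem_cons_self)
      simp only [List.countP_cons, List.sum_cons]
      rw [Finset.sum_add_distrib, ih N (fun p hp => hN p (List.mem_cons_of_mem _ hp))]
      have hind : ∑ j ∈ Finset.range N, (if (decide (j + 1 ≤ a)) = true then 1 else 0) = a := by
        have h1 : ∀ j ∈ Finset.range N, (if (decide (j + 1 ≤ a)) = true then (1:ℕ) else 0)
            = if j < a then 1 else 0 := by
          intro j _
          by_cases h : j < a
          · rw [if_pos (show decide (j + 1 ≤ a) = true by simp only [decide_eq_true_eq]; omega),
              if_pos h]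
          · rw [if_neg (show ¬ decide (j + 1 ≤ a) = true by simp only [decide_eq_true_eq]; omega),
              if_neg h]
        rw [Finset.sum_congr rfl h1, Finset.sum_boole]
        have h2 : Finset.filter (fun j => j < a) (Finset.range N) = Finset.range a := by
          ext j
          simp only [Finset.mem_filter, Finset.mem_range]
          omega
        rw [h2, Finset.card_range]
        rfl
      rw [hind]
      omega
  exact key L (L.headD 0) (sorted_le_headD hL)

end Aux5
section Aux6

open scoped Classical

lemma letters_range {m : ℕ} (w : Fin m → ℕ) (Λ : List ℕ)
    (hw : hasWeight w Λ) (hsum : Λ.sum = m) :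
    ∀ p : Fin m, ∃ i : ℕ, i < Λ.length ∧ w p = i + 1 := by
  intro p
  have hdisj : ∀ i ∈ Finset.range Λ.length, ∀ j ∈ Finset.range Λ.length, i ≠ j →
      Disjoint (Finset.univ.filter (fun p : Fin m => w p = i + 1))
        (Finset.univ.filter (fun p : Fin m => w p = j + 1)) := by
    intro i _ j _ hij
    refine Finset.disjoint_left.mpr fun q hq1 hq2 => ?_
    have h1 := (Finset.mem_filter.mp hq1).2
    have h2 := (Finset.mem_filter.mp hq2).2
    omega
  have hcard : ((Finset.range Λ.length).biUnion
      (fun i => Finset.univ.filter (fun p : Fin m => w p = i + 1))).card = m := by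
    rw [Finset.card_biUnion hdisj]
    rw [Finset.sum_congr rfl (fun i _ => hw i)]
    rw [sum_getD_range, hsum]
  have huniv := Finset.eq_univ_of_card _ (by rw [hcard, Fintype.card_fin])
  have hp : p ∈ (Finset.range Λ.length).biUnion
      (fun i => Finset.univ.filter (fun p : Fin m => w p = i + 1)) := by
    rw [huniv]; exact Finset.mem_univ p
  obtain ⟨i, hi, hpi⟩ := Finset.mem_biUnion.mp hp
  exact ⟨i, Finset.mem_range.mp hi, (Finset.mem_filter.mp hpi).2⟩

lemma length_le_sum {L : List ℕ} (hpos : ∀ p ∈ L, 0 < p) : L.length ≤ L.sum := by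
  induction L with
  | nil => simp
  | cons a L ih =>
    rw [List.length_cons, List.sum_cons]
    have h1 := hpos a (List.mem_cons_self)
    have h2 := ih (fun p hp => hpos p (List.mem_cons_of_mem _ hp))
    omega

lemma headD_le_sum (L : List ℕ) : L.headD 0 ≤ L.sum := by
  cases L with
  | nil => simp
  | cons a L => simp [List.sum_cons]

/-- Lemma R : reduction of the product of row-lex and col-lex descent signs to the image. -/
lemma sgnCnt_pair_eq_image {m : ℕ} (c : Fin m → ℕ × ℕ) (hc : Function.Injective c) :
    sgnCnt m (fun p q => toLex (c q) < toLex (c p))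
      * sgnCnt m (fun p q => toLex (c q).swap < toLex (c p).swap)
    = ∏ x ∈ ((Finset.univ.image c) ×ˢ (Finset.univ.image c)).filter
        (fun x : (ℕ × ℕ) × (ℕ × ℕ) => toLex x.1 < toLex x.2),
        chi (toLex x.2.swap < toLex x.1.swap) := by
  rw [sgnCnt, sgnCnt, ← Finset.prod_mul_distrib]
  refine Finset.prod_bij
    (fun pr _ => if toLex (c pr.1) < toLex (c pr.2) then (c pr.1, c pr.2) else (c pr.2, c pr.1))
    ?_ ?_ ?_ ?_
  · intro pr hpr
    have hlt := mem_pairsF.mp hpr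
    have hne : toLex (c pr.1) ≠ toLex (c pr.2) :=
      fun h => (ne_of_lt hlt) (hc (toLex.injective h))
    by_cases hcl : toLex (c pr.1) < toLex (c pr.2)
    · rw [if_pos hcl]
      exact Finset.mem_filter.mpr ⟨Finset.mem_product.mpr
        ⟨Finset.mem_image_of_mem c (Finset.mem_univ _),
         Finset.mem_image_of_mem c (Finset.mem_univ _)⟩, hcl⟩
    · rw [if_neg hcl]
      exact Finset.mem_filter.mpr ⟨Finset.mem_product.mpr
        ⟨Finset.mem_image_of_mem c (Finset.mem_univ _),
         Finset.mem_image_of_mem c (Finset.mem_univ _)⟩,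
         lt_of_le_of_ne (not_lt.mp hcl) (Ne.symm hne)⟩
  · intro pr1 hpr1 pr2 hpr2 heq
    have hlt1 := mem_pairsF.mp hpr1
    have hlt2 := mem_pairsF.mp hpr2
    have key : (c pr1.1 = c pr2.1 ∧ c pr1.2 = c pr2.2) ∨
        (c pr1.1 = c pr2.2 ∧ c pr1.2 = c pr2.1) := by
      by_cases h1 : toLex (c pr1.1) < toLex (c pr1.2) <;>
        by_cases h2 : toLex (c pr2.1) < toLex (c pr2.2)
      · rw [if_pos h1, if_pos h2] at heq
        exact Or.inl ⟨congrArg Prod.fst heq, congrArg Prod.snd heq⟩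
      · rw [if_pos h1, if_neg h2] at heq
        exact Or.inr ⟨congrArg Prod.fst heq, congrArg Prod.snd heq⟩
      · rw [if_neg h1, if_pos h2] at heq
        exact Or.inr ⟨(congrArg Prod.snd heq : _), (congrArg Prod.fst heq : _)⟩
      · rw [if_neg h1, if_neg h2] at heq
        exact Or.inl ⟨(congrArg Prod.snd heq : _), (congrArg Prod.fst heq : _)⟩
    rcases key with ⟨h1, h2⟩ | ⟨h1, h2⟩
    · exact Prod.ext (hc h1) (hc h2)
    · exfalso
      have e1 := hc h1
      have e2 := hc h2
      rw [e1] at hlt1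
      rw [← e2] at hlt2
      exact lt_asymm hlt1 hlt2
  · intro b hb
    obtain ⟨hmem, hblt⟩ := Finset.mem_filter.mp hb
    obtain ⟨h1, h2⟩ := Finset.mem_product.mp hmem
    obtain ⟨p, _, hp⟩ := Finset.mem_image.mp h1
    obtain ⟨q, _, hq⟩ := Finset.mem_image.mp h2
    have hpq : p ≠ q := by
      intro h
      rw [h, hq] at hp
      rw [hp] at hblt
      exact lt_irrefl _ hblt
    by_cases hlt : p < q
    · refine ⟨(p, q), mem_pairsF.mpr hlt, ?_⟩
      dsimp only
      rw [hp, hq, if_pos hblt]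
    · have hqp : q < p := lt_of_le_of_ne (not_lt.mp hlt) (Ne.symm hpq)
      refine ⟨(q, p), mem_pairsF.mpr hqp, ?_⟩
      dsimp only
      rw [hp, hq, if_neg (fun h => lt_asymm hblt h)]
  · intro pr hpr
    have hlt := mem_pairsF.mp hpr
    have hne : toLex (c pr.1) ≠ toLex (c pr.2) :=
      fun h => (ne_of_lt hlt) (hc (toLex.injective h))
    by_cases hcl : toLex (c pr.1) < toLex (c pr.2)
    · rw [if_pos hcl, chi_neg' (fun h => lt_asymm hcl h), one_mul]
    · have hgt : toLex (c pr.2) < toLex (c pr.1) :=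
        lt_of_le_of_ne (not_lt.mp hcl) (Ne.symm hne)
      rw [if_neg hcl, chi_pos hgt]
      have hsne : toLex (c pr.1).swap ≠ toLex (c pr.2).swap := by
        intro h
        exact (ne_of_lt hlt) (hc (Prod.swap_injective (toLex.injective h)))
      rw [show (-1 : ℤ) * chi (toLex (c pr.2).swap < toLex (c pr.1).swap)
          = -(chi (toLex (c pr.2).swap < toLex (c pr.1).swap)) by ring, neg_chi]
      exact chi_congr ⟨fun h => lt_of_le_of_ne (not_lt.mp h) hsne, fun h h2 => lt_asymm h h2⟩

end Aux6
section Aux7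

lemma finRange_map_get_cast {α : Type*} (l : List α) {m : ℕ} (h : l.length = m) :
    (List.finRange m).map (fun p => l.get (Fin.cast h.symm p)) = l := by
  subst h
  exact List.map_get_finRange l

lemma canonical_config {m : ℕ} (L : List ℕ) (hL : IsPartitionOf m L) :
    ∃ c₀ : Fin m → ℕ × ℕ, Function.Injective c₀ ∧
      (∀ y : ℕ × ℕ, (∃ p, c₀ p = y) ↔
        ∃ i, i < L.length ∧ ∃ j, 1 ≤ j ∧ j ≤ L.getD i 0 ∧ y = (i + 1, j)) ∧
      sgnCnt m (fun p q => toLex (c₀ q) < toLex (c₀ p))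
        * sgnCnt m (fun p q => toLex (c₀ q).swap < toLex (c₀ p).swap) = partSign L := by
  obtain ⟨hsort, hpos, hsum⟩ := hL
  set N := L.length with hN
  set f : ℕ → List (ℕ × ℕ) := fun i => (List.range' 1 (L.getD i 0)).map (fun j => (i + 1, j))
    with hf
  set c₀list : List (ℕ × ℕ) := ((List.range N).map f).flatten with hc₀list
  have hlenf : ∀ i, (f i).length = L.getD i 0 := by
    intro i; rw [hf]; simp
  have hlen : c₀list.length = m := by
    rw [hc₀list, List.length_flatten, List.map_map]
    rw [show (List.length ∘ f) = fun i => L.getD i 0 from funext fun i => hlenf i]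
    rw [hN, map_getD_range, hsum]
  have hpair : c₀list.Pairwise (fun a b => toLex a < toLex b) := by
    rw [hc₀list, List.pairwise_flatten]
    constructor
    · intro l' hl'
      obtain ⟨i, _, rfl⟩ := List.mem_map.mp hl'
      refine List.Pairwise.map _ ?_ (List.pairwise_lt_range' (s := 1))
      intro a b hab
      exact Prod.Lex.lt_iff.mpr (Or.inr ⟨rfl, hab⟩)
    · refine List.Pairwise.map f ?_ (List.pairwise_lt_range)
      intro i i' hii' x hx y hy
      obtain ⟨j, _, rfl⟩ := List.mem_map.mp hx
      obtain ⟨j', _, rfl⟩ := List.mem_map.mp hy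
      exact Prod.Lex.lt_iff.mpr (Or.inl (by show i + 1 < i' + 1; omega))
  have hnodup : c₀list.Nodup :=
    hpair.imp (fun h heq => by rw [heq] at h; exact lt_irrefl _ h)
  refine ⟨fun p => c₀list.get (Fin.cast hlen.symm p), ?_, ?_, ?_⟩
  · intro p q hpq
    have h1 := List.nodup_iff_injective_get.mp hnodup hpq
    have h2 := congrArg Fin.val h1
    exact Fin.ext h2
  · intro y
    have hmem : (∃ p : Fin m, c₀list.get (Fin.cast hlen.symm p) = y) ↔ y ∈ c₀list := by
      constructor
      · rintro ⟨p, rfl⟩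
        exact List.get_mem _ _
      · intro hy
        obtain ⟨n, hn⟩ := List.mem_iff_get.mp hy
        refine ⟨⟨n.val, by rw [← hlen]; exact n.isLt⟩, ?_⟩
        rw [← hn]
        congr 1
    rw [hmem, hc₀list, List.mem_flatten]
    constructor
    · rintro ⟨l', hl', hyl⟩
      obtain ⟨i, hi, rfl⟩ := List.mem_map.mp hl'
      obtain ⟨j, hj, rfl⟩ := List.mem_map.mp hyl
      have hj' := List.mem_range'_1.mp hj
      exact ⟨i, by simpa [hN] using List.mem_range.mp hi, j, hj'.1, by omega, rfl⟩
    · rintro ⟨i, hi, j, hj1, hj2, rfl⟩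
      refine ⟨f i, List.mem_map_of_mem (f := f) (List.mem_range.mpr (by simpa [hN] using hi)), ?_⟩
      rw [hf]
      exact List.mem_map_of_mem (List.mem_range'_1.mpr ⟨hj1, by omega⟩)
  · have hsorted : ∀ p q : Fin m, p < q →
        toLex (c₀list.get (Fin.cast hlen.symm p)) < toLex (c₀list.get (Fin.cast hlen.symm q)) := by
      intro p q hpq
      exact List.pairwise_iff_get.mp hpair _ _ hpq
    have hEval1 : sgnCnt m (fun p q => toLex (c₀list.get (Fin.cast hlen.symm q))
        < toLex (c₀list.get (Fin.cast hlen.symm p))) = 1 :=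
      sgnCnt_of_false (fun p q h hcon => lt_asymm (hsorted p q h) hcon)
    have hEval2 : sgnCnt m (fun p q => toLex (c₀list.get (Fin.cast hlen.symm q)).swap
        < toLex (c₀list.get (Fin.cast hlen.symm p)).swap)
        = sgnCnt m (fun p q => (c₀list.get (Fin.cast hlen.symm q)).2
            < (c₀list.get (Fin.cast hlen.symm p)).2) := by
      refine sgnCnt_congr fun p q hpq => ?_
      have hs := hsorted p q hpq
      rw [Prod.Lex.lt_iff] at hs
      rw [Prod.Lex.lt_iff]
      constructor
      · rintro (h | ⟨h1, h2⟩)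
        · exact h
        · exfalso
          rcases hs with h3 | ⟨h3, h4⟩
          · simp only [ofLex_toLex, Prod.fst_swap, Prod.snd_swap] at h1 h2 h3
            omega
          · simp only [ofLex_toLex, Prod.fst_swap, Prod.snd_swap] at h1 h2 h3 h4
            omega
      · intro h
        exact Or.inl h
    have hword : sgnCnt m (fun p q => (c₀list.get (Fin.cast hlen.symm q)).2
        < (c₀list.get (Fin.cast hlen.symm p)).2) = partSign L := by
      rw [← wordSign_eq_sgnCnt (fun p => (c₀list.get (Fin.cast hlen.symm p)).2), wordSign]
      have hlist : (List.finRange m).map (fun p => (c₀list.get (Fin.cast hlen.symm p)).2)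
          = (L.map (fun n => List.range' 1 n)).flatten := by
        rw [show (fun p : Fin m => (c₀list.get (Fin.cast hlen.symm p)).2)
            = Prod.snd ∘ (fun p : Fin m => c₀list.get (Fin.cast hlen.symm p)) from rfl]
        rw [← List.map_map, finRange_map_get_cast c₀list hlen]
        rw [hc₀list, List.map_flatten, List.map_map]
        have : (List.map Prod.snd ∘ f) = fun i => List.range' 1 (L.getD i 0) := by
          funext i
          rw [Function.comp_apply, hf]
          rw [List.map_map]
          simp
        rw [this]
        rw [show (fun i => List.range' 1 (L.getD i 0))
            = (fun n => List.range' 1 n) ∘ (fun i => L.getD i 0) from rfl]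
        rw [← List.map_map, hN, map_getD_range]
      rw [hlist, partSign]
    rw [hEval1, one_mul, hEval2, hword]

end Aux7
/-- For any `π ∈ G(s,t)`,
`(−1)^s · sgn_s(π·t) · sgn(π) · sgn_t(π⁻¹·s) · (−1)^t = (−1)^λ`. -/
theorem stmt4 {m : ℕ} (L : List ℕ) (hL : IsPartitionOf m L)
    (s t : Fin m → ℕ) (hs : hasWeight s L) (ht : hasWeight t (conjList L)) :
    ∀ π ∈ Gst s t,
      wordSign s * sgnWord s (pact π t) * ((Equiv.Perm.sign π : ℤ)) *
          sgnWord t (pact π⁻¹ s) * wordSign t = partSign L := by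
  obtain ⟨hsort, hpos, hsum⟩ := hL
  intro π hπ
  set u := pact π t with hu
  set v := pact π⁻¹ s with hv
  have hupt : ∀ p : Fin m, u (π p) = t p := by
    intro p
    rw [hu]
    show t (π⁻¹ (π p)) = t p
    rw [Equiv.Perm.inv_def, Equiv.symm_apply_apply]
  have hvps : ∀ q : Fin m, v q = s (π q) := by
    intro q
    rw [hv]
    show s (π⁻¹⁻¹ q) = s (π q)
    rw [inv_inv]
  have hG : sgnWord s u ≠ 0 := hπ
  have hseq : ∀ i ∈ Finset.range m, ((blockList s (i + 1)).map u : Multiset ℕ)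
      = ((List.range' 1 ((blockList s (i + 1)).length) : List ℕ) : Multiset ℕ) := by
    intro i hi
    have hne : seqSgn ((blockList s (i + 1)).map u) ≠ 0 := by
      rw [sgnWord] at hG
      exact Finset.prod_ne_zero_iff.mp hG i hi
    rw [seqSgn, List.length_map] at hne
    by_contra hc
    rw [if_neg hc] at hne
    exact hne rfl
  have hs_letters : ∀ p, ∃ i, i < L.length ∧ s p = i + 1 := letters_range s L hs hsum
  have hLlen : L.length ≤ m := hsum ▸ length_le_sum hpos
  have hs_letters_m : ∀ p, ∃ i, i < m ∧ s p = i + 1 := fun p =>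
    (hs_letters p).imp (fun i h => ⟨lt_of_lt_of_le h.1 hLlen, h.2⟩)
  have hblocklen : ∀ i : ℕ, (blockList s (i + 1)).length = L.getD i 0 := fun i => by
    rw [blockList_length, hs i]
  have hu_mem : ∀ p : Fin m, ∀ i, s p = i + 1 → i < m → (1 ≤ u p ∧ u p ≤ L.getD i 0) := by
    intro p i hsp him
    have hpB : p ∈ blockList s (i + 1) := mem_blockList.mpr hsp
    have h1 : u p ∈ ((blockList s (i + 1)).map u : Multiset ℕ) :=
      Multiset.mem_coe.mpr (List.mem_map_of_mem (f := u) hpB)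
    rw [hseq i (Finset.mem_range.mpr him)] at h1
    have h2 := List.mem_range'_1.mp (Multiset.mem_coe.mp h1)
    rw [hblocklen i] at h2
    omega
  set c : Fin m → ℕ × ℕ := fun p => (s p, u p) with hc_def
  have hcinj : Function.Injective c := by
    intro p q hpq
    have hs_eq : s p = s q := congrArg Prod.fst hpq
    have hu_eq : u p = u q := congrArg Prod.snd hpq
    obtain ⟨i, hi, hsp⟩ := hs_letters p
    have him : i < m := lt_of_lt_of_le hi hLlen
    have hnodupmap : ((blockList s (i + 1)).map u).Nodup := by
      have hperm := Multiset.coe_eq_coe.mp (hseq i (Finset.mem_range.mpr him))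
      exact hperm.nodup_iff.mpr (List.nodup_range')
    exact List.inj_on_of_nodup_map hnodupmap (mem_blockList.mpr hsp)
      (mem_blockList.mpr (hs_eq ▸ hsp)) hu_eq
  have hexists : ∀ i, i < L.length → ∀ j, 1 ≤ j → j ≤ L.getD i 0 →
      ∃ p, s p = i + 1 ∧ u p = j := by
    intro i hi j hj1 hj2
    have him : i < m := lt_of_lt_of_le hi hLlen
    have hjmem : j ∈ ((blockList s (i + 1)).map u : Multiset ℕ) := by
      rw [hseq i (Finset.mem_range.mpr him)]
      refine Multiset.mem_coe.mpr (List.mem_range'_1.mpr ⟨hj1, ?_⟩)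
      rw [hblocklen i]
      omega
    obtain ⟨p, hpB, hpu⟩ := List.mem_map.mp (Multiset.mem_coe.mp hjmem)
    exact ⟨p, mem_blockList.mp hpB, hpu⟩
  have hconjsum : (conjList L).sum = m := by rw [conjList_sum hsort, hsum]
  have ht_letters : ∀ q, ∃ j, j < (conjList L).length ∧ t q = j + 1 :=
    letters_range t (conjList L) ht hconjsum
  have hconjlen : (conjList L).length ≤ m := by
    rw [conjList_length]
    exact hsum ▸ headD_le_sum L
  have ht_letters_m : ∀ q, ∃ j, j < m ∧ t q = j + 1 := fun q =>
    (ht_letters q).imp (fun j h => ⟨lt_of_lt_of_le h.1 hconjlen, h.2⟩)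
  have hblocklent : ∀ j : ℕ, (blockList t (j + 1)).length
      = L.countP (fun p => decide (j + 1 ≤ p)) := by
    intro j
    rw [blockList_length, ht j, conjList_getD hsort]
  have hN : ∀ j ∈ Finset.range m, ((blockList t (j + 1)).map v : Multiset ℕ)
      = ((List.range' 1 ((blockList t (j + 1)).length) : List ℕ) : Multiset ℕ) := by
    intro j _
    have hnodupL : ((blockList t (j + 1)).map v).Nodup := by
      refine List.Nodup.map_on ?_ (blockList_nodup t (j + 1))
      intro q1 hq1 q2 hq2 hv12
      have h1 : c (π q1) = (v q1, t q1) := by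
        rw [hc_def]
        dsimp only
        rw [hvps q1, hupt q1]
      have h2 : c (π q2) = (v q2, t q2) := by
        rw [hc_def]
        dsimp only
        rw [hvps q2, hupt q2]
      have : c (π q1) = c (π q2) := by
        rw [h1, h2, hv12, mem_blockList.mp hq1, mem_blockList.mp hq2]
      exact π.injective (hcinj this)
    refine (Multiset.Nodup.ext (Multiset.coe_nodup.mpr hnodupL)
      (Multiset.coe_nodup.mpr (List.nodup_range' (s := 1) (n := (blockList t (j + 1)).length)))).mpr ?_
    intro a
    rw [Multiset.mem_coe, Multiset.mem_coe, List.mem_range'_1, hblocklent j]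
    constructor
    · intro ha
      obtain ⟨q, hqB, rfl⟩ := List.mem_map.mp ha
      have htq : t q = j + 1 := mem_blockList.mp hqB
      obtain ⟨i, hi, hsp⟩ := hs_letters (π q)
      have hupj : u (π q) = j + 1 := by rw [hupt q, htq]
      have hum := hu_mem (π q) i hsp (lt_of_lt_of_le hi hLlen)
      have hji : j + 1 ≤ L.getD i 0 := by omega
      have hcount := (sorted_getD_countP L hsort i j hi).mp hji
      rw [hvps q, hsp]
      omega
    · rintro ⟨ha1, ha2⟩
      have hicount : a - 1 < L.countP (fun p => decide (j + 1 ≤ p)) := by omega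
      have hilen : a - 1 < L.length := lt_of_lt_of_le hicount List.countP_le_length
      have hji : j + 1 ≤ L.getD (a - 1) 0 := (sorted_getD_countP L hsort (a - 1) j hilen).mpr hicount
      obtain ⟨p, hsp, hup⟩ := hexists (a - 1) hilen (j + 1) (by omega) hji
      refine List.mem_map.mpr ⟨π⁻¹ p, mem_blockList.mpr ?_, ?_⟩
      · rw [show t (π⁻¹ p) = u p from rfl, hup]
      · rw [hvps (π⁻¹ p), Equiv.Perm.inv_def, Equiv.apply_symm_apply, hsp]
        omega
  have hSgnS : sgnWord s u = sgnCnt m (fun p q => s p = s q ∧ u q < u p) :=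
    sgnWord_eq_sgnCnt s u hs_letters_m hseq
  have hSgnT : sgnWord t v = sgnCnt m (fun p q => t p = t q ∧ v q < v p) :=
    sgnWord_eq_sgnCnt t v ht_letters_m hN
  have hMergeS : wordSign s * sgnWord s u = sgnCnt m (fun p q => toLex (c q) < toLex (c p)) := by
    rw [wordSign_eq_sgnCnt s, hSgnS,
      sgnCnt_mul (fun p q _ hc => by rcases hc with ⟨h1, h2, _⟩; omega)]
    refine sgnCnt_congr fun p q _ => ?_
    rw [hc_def]
    dsimp only
    rw [Prod.Lex.lt_iff]
    constructor
    · rintro (h1 | ⟨h1, h2⟩)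
      · exact Or.inl h1
      · exact Or.inr ⟨h1.symm, h2⟩
    · rintro (h1 | ⟨h1, h2⟩)
      · exact Or.inl h1
      · exact Or.inr ⟨h1.symm, h2⟩
  have hMergeT : wordSign t * sgnWord t v
      = sgnCnt m (fun p q => toLex ((c (π q)).swap) < toLex ((c (π p)).swap)) := by
    rw [wordSign_eq_sgnCnt t, hSgnT,
      sgnCnt_mul (fun p q _ hc => by rcases hc with ⟨h1, h2, _⟩; omega)]
    refine sgnCnt_congr fun p q _ => ?_
    have hq2 : (c (π q)).swap = (t q, v q) := by
      rw [hc_def]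
      dsimp only [Prod.swap]
      rw [hvps q, hupt q]
    have hp2 : (c (π p)).swap = (t p, v p) := by
      rw [hc_def]
      dsimp only [Prod.swap]
      rw [hvps p, hupt p]
    rw [hq2, hp2, Prod.Lex.lt_iff]
    constructor
    · rintro (h1 | ⟨h1, h2⟩)
      · exact Or.inl h1
      · exact Or.inr ⟨h1.symm, h2⟩
    · rintro (h1 | ⟨h1, h2⟩)
      · exact Or.inl h1
      · exact Or.inr ⟨h1.symm, h2⟩
  have hk'inj : Function.Injective (fun p => toLex ((c p).swap)) := fun p q h =>
    hcinj (Prod.swap_injective (toLex.injective h))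
  have hComp := sgnCnt_comp (fun p => toLex ((c p).swap)) hk'inj π
  have hsign : ((Equiv.Perm.sign π : ℤˣ) : ℤ) = sgnCnt m (fun p q => (π q : Fin m) < π p) :=
    sign_eq_permChi π
  obtain ⟨c₀, hc₀inj, hc₀range, hc₀val⟩ := canonical_config L ⟨hsort, hpos, hsum⟩
  have hImage : Finset.univ.image c = Finset.univ.image c₀ := by
    have hsub : Finset.univ.image c ⊆ Finset.univ.image c₀ := by
      intro y hy
      obtain ⟨p, _, rfl⟩ := Finset.mem_image.mp hy
      obtain ⟨i, hi, hsp⟩ := hs_letters p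
      have hum := hu_mem p i hsp (lt_of_lt_of_le hi hLlen)
      obtain ⟨pp, hpp⟩ := (hc₀range (c p)).mpr ⟨i, hi, u p, hum.1, hum.2, by
        rw [hc_def]; dsimp only; rw [hsp]⟩
      exact Finset.mem_image.mpr ⟨pp, Finset.mem_univ _, hpp⟩
    refine Finset.eq_of_subset_of_card_le hsub ?_
    rw [Finset.card_image_of_injective _ hcinj, Finset.card_image_of_injective _ hc₀inj]
  have hR := sgnCnt_pair_eq_image c hcinj
  have hR0 := sgnCnt_pair_eq_image c₀ hc₀inj
  rw [hImage] at hR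
  rw [← hR0] at hR
  -- final algebra
  calc wordSign s * sgnWord s u * ((Equiv.Perm.sign π : ℤ)) * sgnWord t v * wordSign t
      = (wordSign s * sgnWord s u) * (wordSign t * sgnWord t v)
        * ((Equiv.Perm.sign π : ℤ)) := by ring
    _ = sgnCnt m (fun p q => toLex (c q) < toLex (c p))
        * (sgnCnt m (fun p q => toLex ((c (π q)).swap) < toLex ((c (π p)).swap))
          * sgnCnt m (fun p q => (π q : Fin m) < π p)) := by
        rw [hMergeS, hMergeT, hsign]
        ring
    _ = sgnCnt m (fun p q => toLex (c q) < toLex (c p))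
        * sgnCnt m (fun p q => toLex ((c q)).swap < toLex ((c p)).swap) := by
        rw [hComp]
    _ = partSign L := by rw [hR, hc₀val]
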